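/- arXiv:2505.19403 — 4 statements merged into one kernel-verified Lean document; each statement's English description precedes it below -/
import Mathlib

section
/- Let E be a finite-dimensional real inner product space, S1 symmetric positive definite and S2 symmetric positive semidefinite on E. If (H, Λ) and (H', Λ') both solve the ICS problem for (S1, S2) (i.e. ⟨S1 h_j, h_{j'}⟩ = δ_{jj'}, ⟨S2 h_j, h_{j'}⟩ = δ_{jj'} λ_j with λ non-increasing, and similarly for H', Λ'), then Λ = Λ'. -/
open RealInnerProductSpace

/-- Count of a value in a list built from a function on `Fin p`, as a fiber cardinality. -/
lemma ics_count_ofFn {p : ℕ} (f : Fin p → ℝ) (a : ℝ) :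
    List.count a (List.ofFn f) = (Finset.univ.filter (fun j => f j = a)).card := by
  classical
  rw [← Multiset.coe_count, List.ofFn_eq_map, ← Multiset.map_coe, Multiset.count_map,
    Finset.card_def, Finset.filter_val]
  exact congrArg Multiset.card (Multiset.filter_congr (fun x _ => ⟨Eq.symm, Eq.symm⟩))

/-- For an ICS basis, the kernel of `S2 - t • S1` is the span of the basis vectors with
eigenvalue `t`, hence its dimension is the number of such indices. -/
lemma ics_finrank_ker {E : Type*} [NormedAddCommGroup E] [InnerProductSpace ℝ E]
    [FiniteDimensional ℝ E] {p : ℕ}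
    (S1 S2 : E →ₗ[ℝ] E) (H : Module.Basis (Fin p) ℝ E) (lam : Fin p → ℝ)
    (h1 : ∀ j j', ⟪S1 (H j), H j'⟫ = if j = j' then 1 else 0)
    (h2 : ∀ j j', ⟪S2 (H j), H j'⟫ = if j = j' then lam j else 0)
    (t : ℝ) :
    Module.finrank ℝ (LinearMap.ker (S2 - t • S1)) =
      (Finset.univ.filter (fun j => lam j = t)).card := by
  classical
  -- a vector orthogonal to all basis vectors is zero
  have key : ∀ v : E, (∀ j', ⟪v, H j'⟫ = 0) → v = 0 := by
    intro v hv
    have hall : ∀ w : E, ⟪v, w⟫ = 0 := by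
      intro w
      rw [← H.sum_repr w]
      simp only [inner_sum, real_inner_smul_right, hv, mul_zero, Finset.sum_const_zero]
    exact inner_self_eq_zero.mp (hall v)
  -- basis vectors with eigenvalue t are generalized eigenvectors
  have heig : ∀ j : Fin p, lam j = t → S2 (H j) = t • S1 (H j) := by
    intro j hj
    have h0 : ∀ j', ⟪S2 (H j) - t • S1 (H j), H j'⟫ = 0 := by
      intro j'
      rw [inner_sub_left, real_inner_smul_left, h1, h2]
      rcases eq_or_ne j j' with h | h
      · subst h; simp [hj]
      · simp [h]
    have := key _ h0
    rwa [sub_eq_zero] at this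
  have hspan : LinearMap.ker (S2 - t • S1) =
      Submodule.span ℝ (Set.range fun j : {j : Fin p // lam j = t} => H j.1) := by
    apply le_antisymm
    · intro v hv
      rw [LinearMap.mem_ker, LinearMap.sub_apply, LinearMap.smul_apply, sub_eq_zero] at hv
      -- coordinates at indices with lam j ≠ t vanish
      have e1 : ∀ j', ⟪S1 v, H j'⟫ = H.repr v j' := by
        intro j'
        conv_lhs => rw [← H.sum_repr v]
        rw [map_sum, sum_inner]
        simp [real_inner_smul_left, h1]
      have e2 : ∀ j', ⟪S2 v, H j'⟫ = H.repr v j' * lam j' := by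
        intro j'
        conv_lhs => rw [← H.sum_repr v]
        rw [map_sum, sum_inner]
        simp [real_inner_smul_left, h2, mul_ite]
      have hc : ∀ j', lam j' ≠ t → H.repr v j' = 0 := by
        intro j' hj'
        have : H.repr v j' * lam j' = t * H.repr v j' := by
          rw [← e2, ← e1, hv, real_inner_smul_left]
        have h3 : H.repr v j' * (lam j' - t) = 0 := by ring_nf; linarith [this]
        rcases mul_eq_zero.mp h3 with h | h
        · exact h
        · exact absurd (sub_eq_zero.mp h) hj'
      rw [← H.sum_repr v]
      refine Submodule.sum_mem _ fun j _ => ?_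
      by_cases hj : lam j = t
      · exact Submodule.smul_mem _ _ (Submodule.subset_span ⟨⟨j, hj⟩, rfl⟩)
      · rw [hc j hj, zero_smul]; exact Submodule.zero_mem _
    · rw [Submodule.span_le]
      rintro _ ⟨⟨j, hj⟩, rfl⟩
      simp only [SetLike.mem_coe, LinearMap.mem_ker, LinearMap.sub_apply, LinearMap.smul_apply]
      rw [heig j hj, sub_self]
  rw [hspan]
  have hli : LinearIndependent ℝ (fun j : {j : Fin p // lam j = t} => H j.1) :=
    H.linearIndependent.comp Subtype.val Subtype.val_injective
  rw [finrank_span_eq_card hli, Fintype.card_subtype]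

/-- Uniqueness of the ICS spectrum: two solutions of the ICS problem for `(S1, S2)`
have the same non-increasing eigenvalue sequence. -/
theorem ics_spectrum_unique {E : Type*} [NormedAddCommGroup E] [InnerProductSpace ℝ E]
    [FiniteDimensional ℝ E] {p : ℕ}
    (S1 S2 : E →ₗ[ℝ] E)
    (hS1sym : ∀ x y : E, ⟪S1 x, y⟫ = ⟪x, S1 y⟫)
    (hS2sym : ∀ x y : E, ⟪S2 x, y⟫ = ⟪x, S2 y⟫)
    (hS1pos : ∀ x : E, x ≠ 0 → 0 < ⟪S1 x, x⟫)
    (hS2pos : ∀ x : E, 0 ≤ ⟪S2 x, x⟫)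
    (H H' : Module.Basis (Fin p) ℝ E) (lam lam' : Fin p → ℝ)
    (hlam : Antitone lam) (hlam' : Antitone lam')
    (h1 : ∀ j j', ⟪S1 (H j), H j'⟫ = if j = j' then 1 else 0)
    (h2 : ∀ j j', ⟪S2 (H j), H j'⟫ = if j = j' then lam j else 0)
    (h1' : ∀ j j', ⟪S1 (H' j), H' j'⟫ = if j = j' then 1 else 0)
    (h2' : ∀ j j', ⟪S2 (H' j), H' j'⟫ = if j = j' then lam' j else 0) :
    lam = lam' := by
  classical
  have hcount : ∀ t : ℝ, (Finset.univ.filter (fun j => lam j = t)).card =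
      (Finset.univ.filter (fun j => lam' j = t)).card := by
    intro t
    rw [← ics_finrank_ker S1 S2 H lam h1 h2 t, ← ics_finrank_ker S1 S2 H' lam' h1' h2' t]
  have hperm : List.Perm (List.ofFn lam) (List.ofFn lam') := by
    rw [List.perm_iff_count]
    intro a
    rw [ics_count_ofFn, ics_count_ofFn, hcount]
  have hs : (List.ofFn lam).Pairwise (· ≥ ·) :=
    List.pairwise_ofFn.mpr fun i j h => hlam h.le
  have hs' : (List.ofFn lam').Pairwise (· ≥ ·) :=
    List.pairwise_ofFn.mpr fun i j h => hlam' h.le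
  exact List.ofFn_injective (hperm.eq_of_pairwise' hs hs')
end

section
/- Let E be a finite-dimensional real inner product space, S1 symmetric positive definite and S2 symmetric positive semidefinite, and let (h_1,...,h_p; λ_1 ≥ ... ≥ λ_p) solve the ICS problem for (S1, S2). Then λ_1 = max over nonzero h ∈ E of ⟨S2 h, h⟩ / ⟨S1 h, h⟩, and the maximum is attained at h_1. -/
open RealInnerProductSpace

/-- Courant–Fischer, first step: if `(h, lam)` solves the ICS problem for `(S1, S2)`,
then `lam 0 = max_{v ≠ 0} ⟪S2 v, v⟫ / ⟪S1 v, v⟫`, attained at `h 0`. -/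
theorem ics_first_eigenvalue_max {E : Type*} [NormedAddCommGroup E]
    [InnerProductSpace ℝ E] [FiniteDimensional ℝ E] {p : ℕ} (hp : 0 < p)
    (S1 S2 : E →ₗ[ℝ] E)
    (hS1sym : ∀ x y : E, ⟪S1 x, y⟫ = ⟪x, S1 y⟫)
    (hS2sym : ∀ x y : E, ⟪S2 x, y⟫ = ⟪x, S2 y⟫)
    (hS1pos : ∀ x : E, x ≠ 0 → 0 < ⟪S1 x, x⟫)
    (hS2pos : ∀ x : E, 0 ≤ ⟪S2 x, x⟫)
    (h : Module.Basis (Fin p) ℝ E) (lam : Fin p → ℝ)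
    (hlam : Antitone lam)
    (h1 : ∀ j j', ⟪S1 (h j), h j'⟫ = if j = j' then 1 else 0)
    (h2 : ∀ j j', ⟪S2 (h j), h j'⟫ = if j = j' then lam j else 0) :
    (∀ v : E, v ≠ 0 → ⟪S2 v, v⟫ / ⟪S1 v, v⟫ ≤ lam ⟨0, hp⟩) ∧
    ⟪S2 (h ⟨0, hp⟩), h ⟨0, hp⟩⟫ / ⟪S1 (h ⟨0, hp⟩), h ⟨0, hp⟩⟫ = lam ⟨0, hp⟩ := by
  have expand : ∀ (S : E →ₗ[ℝ] E) (a : Fin p → ℝ),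
      (∀ j j', ⟪S (h j), h j'⟫ = if j = j' then a j else 0) →
      ∀ v : E, ⟪S v, v⟫ = ∑ j, a j * (h.repr v j) ^ 2 := by
    intro S a hS v
    conv_lhs => rw [← h.sum_repr v]
    rw [map_sum, sum_inner]
    have : ∀ j, ⟪S (h.repr v j • h j), ∑ j', h.repr v j' • h j'⟫
        = a j * (h.repr v j) ^ 2 := by
      intro j
      rw [map_smul, inner_smul_left, inner_sum]
      simp only [inner_smul_right, hS, mul_ite, mul_zero, Finset.sum_ite_eq,
        Finset.mem_univ, if_true]
      simp only [RCLike.star_def, conj_trivial]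
      ring
    simp_rw [this]
  have e1 : ∀ v : E, ⟪S1 v, v⟫ = ∑ j, (h.repr v j) ^ 2 := by
    intro v; rw [expand S1 (fun _ => 1) (by intro j j'; rw [h1]) v]; simp
  have e2 : ∀ v : E, ⟪S2 v, v⟫ = ∑ j, lam j * (h.repr v j) ^ 2 :=
    fun v => expand S2 lam h2 v
  have hle : ∀ j : Fin p, lam j ≤ lam ⟨0, hp⟩ := fun j => hlam (Fin.mk_le_of_le_val (Nat.zero_le _))
  constructor
  · intro v hv
    have hpos : 0 < ⟪S1 v, v⟫ := hS1pos v hv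
    rw [div_le_iff₀ hpos, e1, e2, Finset.mul_sum]
    apply Finset.sum_le_sum
    intro j _
    exact mul_le_mul_of_nonneg_right (hle j) (sq_nonneg _)
  · have a1 := h1 ⟨0, hp⟩ ⟨0, hp⟩
    have a2 := h2 ⟨0, hp⟩ ⟨0, hp⟩
    simp only [if_pos] at a1 a2
    rw [a1, a2, div_one]
end

section
/- Let E be a finite-dimensional real inner product space, S1 symmetric positive definite, S2 symmetric positive semidefinite, and (h_1,...,h_p; λ_1 ≥ ... ≥ λ_p) a solution of the ICS problem for (S1, S2). Then for each 1 ≤ j ≤ p, λ_j = max { ⟨S2 h, h⟩ / ⟨S1 h, h⟩ : h ≠ 0, ⟨S1 h, h_{j'}⟩ = 0 for all j' < j }. -/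
open RealInnerProductSpace

/-- Courant–Fischer variational principle for ICS: if `(h, lam)` solves the ICS problem
for `(S1, S2)`, then for each `j`, `lam j` is the maximum of `⟪S2 v, v⟫ / ⟪S1 v, v⟫` over
nonzero `v` that are `S1`-orthogonal to `h j'` for all `j' < j`. -/
theorem ics_courant_fischer {E : Type*} [NormedAddCommGroup E]
    [InnerProductSpace ℝ E] [FiniteDimensional ℝ E] {p : ℕ}
    (S1 S2 : E →ₗ[ℝ] E)
    (hS1sym : ∀ x y : E, ⟪S1 x, y⟫ = ⟪x, S1 y⟫)
    (hS2sym : ∀ x y : E, ⟪S2 x, y⟫ = ⟪x, S2 y⟫)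
    (hS1pos : ∀ x : E, x ≠ 0 → 0 < ⟪S1 x, x⟫)
    (hS2pos : ∀ x : E, 0 ≤ ⟪S2 x, x⟫)
    (h : Module.Basis (Fin p) ℝ E) (lam : Fin p → ℝ)
    (hlam : Antitone lam)
    (h1 : ∀ j j', ⟪S1 (h j), h j'⟫ = if j = j' then 1 else 0)
    (h2 : ∀ j j', ⟪S2 (h j), h j'⟫ = if j = j' then lam j else 0) :
    ∀ j : Fin p, IsGreatest
      {r : ℝ | ∃ v : E, v ≠ 0 ∧ (∀ j' : Fin p, j' < j → ⟪S1 v, h j'⟫ = 0) ∧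
        r = ⟪S2 v, v⟫ / ⟪S1 v, v⟫}
      (lam j) := by
  intro j
  constructor
  · refine ⟨h j, h.ne_zero j, ?_, ?_⟩
    · intro j' hj'
      rw [h1]
      simp [(Fin.ne_of_gt hj').symm, ne_of_gt hj']
    · rw [h1, h2]
      simp
  · rintro r ⟨v, hv, hortho, rfl⟩
    set c := h.repr v with hc
    have hvsum : v = ∑ i, c i • h i := (h.sum_repr v).symm
    have hS1v : ∀ w : E, ⟪S1 v, w⟫ = ∑ i, c i * ⟪S1 (h i), w⟫ := by
      intro w
      conv_lhs => rw [hvsum]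
      rw [map_sum, sum_inner]
      simp [real_inner_smul_left]
    have hbas1 : ∀ i : Fin p, ⟪S1 (h i), v⟫ = c i := by
      intro i
      conv_lhs => rw [hvsum]
      rw [inner_sum]
      simp [real_inner_smul_right, h1]
    have hbas2 : ∀ i : Fin p, ⟪S2 (h i), v⟫ = c i * lam i := by
      intro i
      conv_lhs => rw [hvsum]
      rw [inner_sum]
      simp [real_inner_smul_right, h2, mul_comm]
    have key1 : ⟪S1 v, v⟫ = ∑ i, c i ^ 2 := by
      rw [hS1v v]
      refine Finset.sum_congr rfl fun i _ => ?_
      rw [hbas1 i]; ring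
    have hS2vw : ∀ w : E, ⟪S2 v, w⟫ = ∑ i, c i * ⟪S2 (h i), w⟫ := by
      intro w
      conv_lhs => rw [hvsum]
      rw [map_sum, sum_inner]
      simp [real_inner_smul_left]
    have hS2v : ⟪S2 v, v⟫ = ∑ i, c i ^ 2 * lam i := by
      rw [hS2vw v]
      refine Finset.sum_congr rfl fun i _ => ?_
      rw [hbas2 i]; ring
    have hcz : ∀ j' : Fin p, j' < j → c j' = 0 := by
      intro j' hj'
      have := hortho j' hj'
      rw [hS1v] at this
      simpa [h1] using this
    have hpos : 0 < ⟪S1 v, v⟫ := hS1pos v hv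
    rw [div_le_iff₀ hpos, key1, hS2v, Finset.mul_sum]
    refine Finset.sum_le_sum fun i _ => ?_
    rcases lt_or_ge i j with hij | hij
    · rw [hcz i hij]; simp
    · calc c i ^ 2 * lam i ≤ c i ^ 2 * lam j := by
            exact mul_le_mul_of_nonneg_left (hlam hij) (sq_nonneg _)
        _ = lam j * c i ^ 2 := mul_comm _ _
end

section
/- Let φ : E → F be a linear isometric isomorphism between finite-dimensional real inner product spaces, w : ℝ≥0 → ℝ measurable, and X an E-valued random vector with invertible covariance such that the w-weighted covariance Cov_w[X] exists, defined by ⟨Cov_w[X] x, y⟩ = E[w(‖Cov[X]^{-1/2}(X − EX)‖)² ⟨X − EX, x⟩⟨X − EX, y⟩]. Then Cov_w[φ(X)] = φ ∘ Cov_w[X] ∘ φ⁻¹. -/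
open RealInnerProductSpace MeasureTheory

lemma sqrt_unique_aux {G : Type*} [NormedAddCommGroup G] [InnerProductSpace ℝ G]
    [FiniteDimensional ℝ G] (S T : G →ₗ[ℝ] G)
    (hSsym : ∀ x y : G, ⟪S x, y⟫ = ⟪x, S y⟫) (hSpos : ∀ x : G, x ≠ 0 → 0 < ⟪S x, x⟫)
    (hTsym : ∀ x y : G, ⟪T x, y⟫ = ⟪x, T y⟫) (hTpos : ∀ x : G, x ≠ 0 → 0 < ⟪T x, x⟫)
    (hST : ∀ x : G, S (S x) = T (T x)) : S = T := by
  have hTsym' : T.IsSymmetric := hTsym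
  set n := Module.finrank ℝ G
  have hn : Module.finrank ℝ G = n := rfl
  let b := hTsym'.eigenvectorBasis hn
  apply b.toBasis.ext
  intro i
  set v : G := b i with hv
  set c : ℝ := hTsym'.eigenvalues hn i with hc
  have hvne : v ≠ 0 := b.toBasis.ne_zero i
  have hTv : T v = c • v := hTsym'.apply_eigenvectorBasis hn i
  have hcpos : 0 < c := by
    have h0 := hTpos v hvne
    rw [hTv, real_inner_smul_left] at h0
    have hnv : ⟪v, v⟫ = 1 := by
      rw [real_inner_self_eq_norm_sq, hv]
      simp [b.orthonormal.1 i]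
    nlinarith
  have key : S (S v - c • v) + c • (S v - c • v) = 0 := by
    have h1 : S (S v) = c • c • v := by
      rw [hST, hTv, _root_.map_smul, hTv]
    rw [map_sub, _root_.map_smul, h1]
    module
  have hzero : S v - c • v = 0 := by
    by_contra h
    have h1 : 0 < ⟪S (S v - c • v) + c • (S v - c • v), S v - c • v⟫ := by
      rw [inner_add_left, real_inner_smul_left]
      have h2 := hSpos _ h
      have h3 : 0 < ⟪S v - c • v, S v - c • v⟫ := by
        rw [real_inner_self_eq_norm_sq]
        exact pow_pos (norm_pos_iff.mpr h) 2
      nlinarith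
    rw [key, inner_zero_left] at h1
    exact lt_irrefl 0 h1
  have : S v = c • v := sub_eq_zero.mp hzero
  rw [OrthonormalBasis.coe_toBasis, this, hTv]

/-- Transport of the `w`-weighted covariance operator along a linear isometric
isomorphism: `Cov_w[φ(X)] = φ ∘ Cov_w[X] ∘ φ⁻¹`. Here `R` (resp. `T`) is the unique
symmetric positive definite square root of `Cov[X]` (resp. of
`Cov[φ(X)] = φ ∘ Cov[X] ∘ φ⁻¹`), so that `R.symm` plays the role of `Cov[X]^{-1/2}`. -/
theorem covw_isometry_transport {E F : Type*}
    [NormedAddCommGroup E] [InnerProductSpace ℝ E] [FiniteDimensional ℝ E]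
    [NormedAddCommGroup F] [InnerProductSpace ℝ F] [FiniteDimensional ℝ F]
    {Ω : Type*} [MeasureSpace Ω] {μ : Measure Ω} [IsProbabilityMeasure μ]
    (φ : E ≃ₗᵢ[ℝ] F)
    (w : ℝ → ℝ) (hw : Measurable w)
    (X : Ω → E) (hX : Integrable X μ) (hX2 : MemLp X 2 μ)
    -- the covariance operator of `X`, assumed invertible
    (CX : E →ₗ[ℝ] E)
    (hCX : ∀ x y : E, ⟪CX x, y⟫ =
      ∫ ω, ⟪X ω - ∫ ω', X ω' ∂μ, x⟫ * ⟪X ω - ∫ ω', X ω' ∂μ, y⟫ ∂μ)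
    -- `R` is the symmetric positive definite square root of `CX`
    (R : E ≃ₗ[ℝ] E)
    (hRsym : ∀ x y : E, ⟪R x, y⟫ = ⟪x, R y⟫)
    (hRpos : ∀ x : E, x ≠ 0 → 0 < ⟪R x, x⟫)
    (hRR : ∀ x : E, R (R x) = CX x)
    -- `T` is the symmetric positive definite square root of `Cov[φ(X)] = φ ∘ CX ∘ φ⁻¹`
    (T : F ≃ₗ[ℝ] F)
    (hTsym : ∀ x y : F, ⟪T x, y⟫ = ⟪x, T y⟫)
    (hTpos : ∀ x : F, x ≠ 0 → 0 < ⟪T x, x⟫)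
    (hTT : ∀ y : F, T (T y) = φ (CX (φ.symm y)))
    -- square-integrability of the weighted centred variable
    (hL2 : MemLp (fun ω => w ‖R.symm (X ω - ∫ ω', X ω' ∂μ)‖ • (X ω - ∫ ω', X ω' ∂μ)) 2 μ)
    -- the weighted covariance operators of `X` and of `φ(X)`
    (Cw : E →ₗ[ℝ] E)
    (hCw : ∀ x y : E, ⟪Cw x, y⟫ =
      ∫ ω, (w ‖R.symm (X ω - ∫ ω', X ω' ∂μ)‖) ^ 2 *
        (⟪X ω - ∫ ω', X ω' ∂μ, x⟫ * ⟪X ω - ∫ ω', X ω' ∂μ, y⟫) ∂μ)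
    (Cw' : F →ₗ[ℝ] F)
    (hCw' : ∀ x y : F, ⟪Cw' x, y⟫ =
      ∫ ω, (w ‖T.symm (φ (X ω) - ∫ ω', φ (X ω') ∂μ)‖) ^ 2 *
        (⟪φ (X ω) - ∫ ω', φ (X ω') ∂μ, x⟫ * ⟪φ (X ω) - ∫ ω', φ (X ω') ∂μ, y⟫) ∂μ) :
    ∀ y : F, Cw' y = φ (Cw (φ.symm y)) := by
  set m : E := ∫ ω', X ω' ∂μ with hm
  -- `S = φ ∘ R ∘ φ⁻¹` is a symmetric positive definite square root of `φ ∘ CX ∘ φ⁻¹`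
  set S : F →ₗ[ℝ] F := (φ.toLinearEquiv.symm.trans (R.trans φ.toLinearEquiv)).toLinearMap
    with hS
  have hSapp : ∀ z : F, S z = φ (R (φ.symm z)) := fun z => rfl
  have hinner : ∀ (a : E) (z : F), ⟪φ a, z⟫ = ⟪a, φ.symm z⟫ := by
    intro a z
    conv_lhs => rw [← φ.apply_symm_apply z]
    exact φ.inner_map_map a (φ.symm z)
  have hinner2 : ∀ (z : F) (a : E), ⟪z, φ a⟫ = ⟪φ.symm z, a⟫ := by
    intro z a
    conv_lhs => rw [← φ.apply_symm_apply z]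
    exact φ.inner_map_map (φ.symm z) a
  have hsymmne : ∀ z : F, z ≠ 0 → φ.symm z ≠ 0 := by
    intro z hz h
    exact hz (by simpa using congrArg φ h)
  have hSsym : ∀ x y : F, ⟪S x, y⟫ = ⟪x, S y⟫ := by
    intro x y
    rw [hSapp, hSapp, hinner, hRsym, ← hinner2]
  have hSpos : ∀ x : F, x ≠ 0 → 0 < ⟪S x, x⟫ := by
    intro x hx
    rw [hSapp, hinner]
    exact hRpos _ (hsymmne x hx)
  have hSq : ∀ z : F, S (S z) = T (T z) := by
    intro z
    rw [hSapp, hSapp, φ.symm_apply_apply, hRR, hTT]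
  have hST : S = (T : F →ₗ[ℝ] F) :=
    sqrt_unique_aux S T hSsym hSpos hTsym hTpos hSq
  have hTapp : ∀ z : F, T z = φ (R (φ.symm z)) := by
    intro z
    rw [← hSapp, hST]; rfl
  have hTsymm : ∀ a : E, T.symm (φ a) = φ (R.symm a) := by
    intro a
    have : T (φ (R.symm a)) = φ a := by
      rw [hTapp, φ.symm_apply_apply, R.apply_symm_apply]
    rw [← this, T.symm_apply_apply]
  -- integral of φ ∘ X
  have hint : (∫ ω', φ (X ω') ∂μ) = φ m := by
    rw [hm]
    exact
      (ContinuousLinearMap.integral_comp_comm (φ.toContinuousLinearEquiv : E →L[ℝ] F) hX)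
  have hcenter : ∀ ω, φ (X ω) - ∫ ω', φ (X ω') ∂μ = φ (X ω - m) := by
    intro ω
    rw [hint, ← map_sub]
  -- conclude
  intro y
  apply ext_inner_right ℝ
  intro z
  rw [hCw' y z]
  have : ⟪φ (Cw (φ.symm y)), z⟫ = ⟪Cw (φ.symm y), φ.symm z⟫ := hinner _ _
  rw [this, hCw (φ.symm y) (φ.symm z)]
  refine integral_congr_ae (Filter.Eventually.of_forall fun ω => ?_)
  dsimp only
  rw [hcenter ω, hTsymm, hinner, hinner, φ.norm_map]
end
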